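/- Let r be a directed graph on a vertex type V, let w_i ≠ w_j be vertices with r w_i w_j and ¬ r w_j w_j, and let N⁻(w_j) := { v | r v w_j }. Then there exists a path from w_i to some vertex of N⁻(w_j) ∖ {w_i} if and only if there exists a parallel path from w_i to w_j or there exists a loop through w_j that does not pass through w_i. -/

import Mathlib

/-- A path in a directed graph `r`: a nonempty duplicate-free list of vertices
in which every pair of consecutive entries is related by `r`. -/
def IsPath {V : Type*} (r : V → V → Prop) (l : List V) : Prop :=
  l ≠ [] ∧ l.Nodup ∧ l.Chain' r

/-- A path from the vertex set `V1` to the vertex set `V2`. -/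
def IsPathFromTo {V : Type*} (r : V → V → Prop) (V1 V2 : Set V) (l : List V) : Prop :=
  IsPath r l ∧ ∀ h : l ≠ [], l.head h ∈ V1 ∧ l.getLast h ∈ V2

/-- A loop through `wj` with (nonempty) list `m` of intermediate vertices:
the list `wj :: m ++ [wj]` is a chain for `r`, and the vertices `wj :: m`
are pairwise distinct.  Its vertices are the entries of `wj :: m`. -/
def IsLoopThrough {V : Type*} (r : V → V → Prop) (wj : V) (m : List V) : Prop :=
  m ≠ [] ∧ (wj :: m).Nodup ∧ (wj :: (m ++ [wj])).Chain' r

theorem stmt12 {V : Type*} (r : V → V → Prop) (wi wj : V)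
    (hne : wi ≠ wj) (hedge : r wi wj) (hnoself : ¬ r wj wj) :
    (∃ l : List V, IsPathFromTo r {wi} ({v | r v wj} \ {wi}) l) ↔
      ((∃ l : List V, IsPathFromTo r {wi} {wj} l ∧ l ≠ [wi, wj]) ∨
       (∃ m : List V, IsLoopThrough r wj m ∧ wi ∉ wj :: m)) := by
  constructor
  · rintro ⟨l, ⟨hl0, hnd, hch⟩, hends⟩
    obtain ⟨hhead, hlast⟩ := hends hl0
    simp only [Set.mem_singleton_iff] at hhead
    obtain ⟨hrv, hvne⟩ := hlast
    simp only [Set.mem_setOf_eq] at hrv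
    simp only [Set.mem_singleton_iff] at hvne
    by_cases hw : wj ∈ l
    · right
      obtain ⟨s, t, rfl⟩ := List.append_of_mem hw
      have ht : t ≠ [] := by
        rintro rfl
        have : (s ++ [wj]).getLast (by simp) = wj := List.getLast_append _
        rw [this] at hrv
        exact hnoself hrv
      have hsuff : (wj :: t).Chain' r := hch.suffix ⟨s, rfl⟩
      have hlast' : (s ++ wj :: t).getLast hl0 = (wj :: t).getLast (by simp) := by
        rw [List.getLast_append_of_ne_nil _ (List.cons_ne_nil _ _)]
      have hndt : (wj :: t).Nodup := (List.nodup_append.mp hnd).2.1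
      refine ⟨t, ⟨ht, hndt, ?_⟩, ?_⟩
      · show ((wj :: t) ++ [wj]).Chain' r
        refine List.isChain_append.mpr ?_
        refine ⟨hsuff, List.isChain_singleton _, ?_⟩
        intro x hx y hy
        simp at hy
        subst hy
        rw [List.getLast?_eq_getLast (l := wj :: t) (by simp), Option.mem_some_iff] at hx
        subst hx
        rw [hlast'] at hrv
        exact hrv
      · have hs : s ≠ [] := by
          rintro rfl
          simp at hhead
          exact hne hhead.symm
        have hh : (s ++ wj :: t).head hl0 = s.head hs := List.head_append_of_ne_nil hs
        have : wi ∈ s := by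
          rw [hh] at hhead
          exact hhead ▸ List.head_mem hs
        intro hmem
        exact (List.disjoint_of_nodup_append hnd) this hmem
    · left
      have hlast2 : (l ++ [wj]).getLast (by simp) = wj := List.getLast_append _
      refine ⟨l ++ [wj], ⟨⟨by simp, ?_, ?_⟩, ?_⟩, ?_⟩
      · rw [List.nodup_append']
        exact ⟨hnd, List.nodup_singleton _, by simpa [List.disjoint_singleton] using hw⟩
      · refine List.isChain_append.mpr ?_
        refine ⟨hch, List.isChain_singleton _, ?_⟩
        intro x hx y hy
        simp at hy; subst hy
        rw [List.getLast?_eq_getLast hl0, Option.mem_some_iff] at hx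
        subst hx; exact hrv
      · intro h
        constructor
        · rw [List.head_append_of_ne_nil hl0]
          exact hhead
        · rw [hlast2]; rfl
      · intro h
        have hl : l = [wi] := by
          have := congrArg List.dropLast h
          simpa using this
        subst hl
        simp at hvne
  · rintro (⟨l, ⟨⟨hl0, hnd, hch⟩, hends⟩, hne2⟩ | ⟨m, ⟨hm0, hndm, hchm⟩, hwim⟩)
    · obtain ⟨hhead, hlast⟩ := hends hl0
      simp only [Set.mem_singleton_iff] at hhead hlast
      obtain ⟨a, rest, rfl⟩ := List.exists_cons_of_ne_nil hl0
      obtain rfl : wi = a := by simpa using hhead.symm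
      have hrest : rest ≠ [] := by
        rintro rfl
        simp at hlast
        exact hne hlast
      -- l = wi :: rest, last rest = wj
      obtain ⟨m', rfl⟩ : ∃ m', rest = m' ++ [wj] := by
        refine ⟨rest.dropLast, ?_⟩
        have := List.dropLast_append_getLast hrest
        rw [List.getLast_cons hrest] at hlast
        rw [hlast] at this
        exact this.symm
      have hm' : m' ≠ [] := by
        rintro rfl
        exact hne2 (by simp)
      refine ⟨wi :: m', ⟨⟨by simp, ?_, ?_⟩, ?_⟩⟩
      · have : (wi :: m') ++ [wj] = wi :: (m' ++ [wj]) := by simp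
        exact (List.nodup_append.mp (this ▸ hnd)).1
      · have : (wi :: m') ++ [wj] = wi :: (m' ++ [wj]) := by simp
        exact ((List.isChain_append).mp (this ▸ hch)).1
      · intro h
        refine ⟨by simp, ?_, ?_⟩
        · show r ((wi :: m').getLast h) wj
          have : (wi :: m') ++ [wj] = wi :: (m' ++ [wj]) := by simp
          have hc := ((List.isChain_append).mp (this ▸ hch)).2.2
          apply hc
          · rw [List.getLast?_eq_getLast h]; rfl
          · rfl
        · show (wi :: m').getLast h ≠ wi
          rw [List.getLast_cons (by exact hm')]
          intro heq
          have : wi ∈ m' := heq ▸ List.getLast_mem hm'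
          simp [List.nodup_cons, List.nodup_append] at hnd
          exact hnd.1.1 this
    · refine ⟨wi :: wj :: m, ⟨⟨by simp, ?_, ?_⟩, ?_⟩⟩
      · exact List.nodup_cons.mpr ⟨hwim, hndm⟩
      · refine List.isChain_cons.mpr ⟨?_, ?_⟩
        · intro y hy; simp at hy; subst hy; exact hedge
        · have : wj :: (m ++ [wj]) = (wj :: m) ++ [wj] := by simp
          exact ((List.isChain_append).mp (this ▸ hchm)).1
      · intro h
        refine ⟨by simp, ?_, ?_⟩
        · show r ((wi :: wj :: m).getLast h) wj
          have heq : (wi :: wj :: m).getLast h = (wj :: m).getLast (by simp) := by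
            rw [List.getLast_cons (by simp)]
          rw [heq]
          have : wj :: (m ++ [wj]) = (wj :: m) ++ [wj] := by simp
          have hc := ((List.isChain_append).mp (this ▸ hchm)).2.2
          apply hc
          · rw [List.getLast?_eq_getLast (l := wj :: m) (by simp)]; rfl
          · rfl
        · show (wi :: wj :: m).getLast h ≠ wi
          have heq : (wi :: wj :: m).getLast h = (wj :: m).getLast (by simp) := by
            rw [List.getLast_cons (by simp)]
          rw [heq]
          intro hc
          exact hwim (hc ▸ List.getLast_mem (by simp))
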